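/- Let X be an ℝ^{N×D}-valued random matrix whose N rows are i.i.d. copies of a random row vector X₁ ∈ ℝ^{1×D} with entries in [−1,1]. Fix p ∈ ℕ and A ∈ ℝ^{D^p × L}. Then N^{-p} E|X^{⊗p} A|² → (A Aᵀ) · (E[X₁ᵀ X₁])^{⊗p} as N → ∞, where X^{⊗p} is the p-fold Kronecker power of X viewed as an N^p × D^p matrix and |·| is the Frobenius norm. -/

import Mathlib

open Filter Topology MeasureTheory

noncomputable def dotpG {m n : Type*} [Fintype m] [Fintype n] (a b : Matrix m n ℝ) : ℝ :=
  ∑ i, ∑ j, a i j * b i j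

/-- `p`-fold Kronecker tensor power of a `D × D` matrix, indexed by `p`-tuples. -/
noncomputable def kpowD {D : ℕ} (p : ℕ) (q : Matrix (Fin D) (Fin D) ℝ) :
    Matrix (Fin p → Fin D) (Fin p → Fin D) ℝ :=
  fun d d' => ∏ i, q (d i) (d' i)

/-- `p`-fold Kronecker tensor power of an `N × D` matrix, viewed as an `N^p × D^p` matrix. -/
noncomputable def kpowX {N D : ℕ} (p : ℕ) (x : Fin N → Fin D → ℝ) :
    Matrix (Fin p → Fin N) (Fin p → Fin D) ℝ :=
  fun n d => ∏ i, x (n i) (d i)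

section Aux

variable {D p N : ℕ}

private lemma measK (n : Fin p → Fin N) (d d' : Fin p → Fin D) :
    Measurable (fun x : Fin N → Fin D → ℝ => ∏ i, x (n i) (d i) * x (n i) (d' i)) := by
  apply Finset.measurable_prod
  intro i _
  fun_prop

private lemma abs_prod_le_one {ι : Type*} (s : Finset ι) (f : ι → ℝ)
    (h : ∀ i ∈ s, |f i| ≤ 1) : |∏ i ∈ s, f i| ≤ 1 := by
  rw [Finset.abs_prod]
  exact Finset.prod_le_one (fun i _ => abs_nonneg _) h

private lemma aebdd_pi (ν : Measure (Fin D → ℝ)) [IsProbabilityMeasure ν]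
    (hbdd : ∀ᵐ y ∂ν, ∀ j, y j ∈ Set.Icc (-1:ℝ) 1) (N : ℕ) :
    ∀ᵐ x ∂(Measure.pi fun _ : Fin N => ν), ∀ m j, x m j ∈ Set.Icc (-1:ℝ) 1 := by
  set s : Set (Fin D → ℝ) := {y | ∀ j, y j ∈ Set.Icc (-1:ℝ) 1} with hs_def
  have hs : MeasurableSet s := by
    have : s = ⋂ j, (fun y : Fin D → ℝ => y j) ⁻¹' Set.Icc (-1:ℝ) 1 := by
      ext y; simp [hs_def]
    rw [this]
    exact MeasurableSet.iInter fun j => (measurable_pi_apply j) measurableSet_Icc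
  have hν : ν s = 1 := by
    rw [← prob_compl_eq_zero_iff hs]
    have h := hbdd
    rw [ae_iff] at h
    rw [hs_def, Set.compl_setOf]
    exact h
  have hT : (Measure.pi fun _ : Fin N => ν) (Set.pi Set.univ (fun _ : Fin N => s)) = 1 := by
    rw [Measure.pi_pi]
    simp [hν]
  have hT' : (Measure.pi fun _ : Fin N => ν) (Set.pi Set.univ (fun _ : Fin N => s))ᶜ = 0 := by
    rw [prob_compl_eq_zero_iff (MeasurableSet.univ_pi (fun _ => hs))]
    exact hT
  rw [ae_iff]
  refine measure_mono_null ?_ hT'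
  intro x hx
  simp only [Set.mem_compl_iff, Set.mem_pi, Set.mem_univ, forall_true_left]
  intro hall
  exact hx (fun m j => hall m j)

private lemma boundK (ν : Measure (Fin D → ℝ)) [IsProbabilityMeasure ν]
    (hbdd : ∀ᵐ y ∂ν, ∀ j, y j ∈ Set.Icc (-1:ℝ) 1)
    (n : Fin p → Fin N) (d d' : Fin p → Fin D) :
    ∀ᵐ x ∂(Measure.pi fun _ : Fin N => ν),
      ‖∏ i, x (n i) (d i) * x (n i) (d' i)‖ ≤ 1 := by
  filter_upwards [aebdd_pi ν hbdd N] with x hx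
  rw [Real.norm_eq_abs]
  apply abs_prod_le_one
  intro i _
  rw [abs_mul]
  have h1 := hx (n i) (d i)
  have h2 := hx (n i) (d' i)
  have := mul_le_one₀ (abs_le.2 ⟨h1.1, h1.2⟩) (abs_nonneg _) (abs_le.2 ⟨h2.1, h2.2⟩)
  exact this

private lemma intK (ν : Measure (Fin D → ℝ)) [IsProbabilityMeasure ν]
    (hbdd : ∀ᵐ y ∂ν, ∀ j, y j ∈ Set.Icc (-1:ℝ) 1)
    (n : Fin p → Fin N) (d d' : Fin p → Fin D) :
    Integrable (fun x : Fin N → Fin D → ℝ => ∏ i, x (n i) (d i) * x (n i) (d' i))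
      (Measure.pi fun _ : Fin N => ν) :=
  ⟨(measK n d d').aestronglyMeasurable,
    HasFiniteIntegral.of_bounded (C := 1) (boundK ν hbdd n d d')⟩

private lemma absintK (ν : Measure (Fin D → ℝ)) [IsProbabilityMeasure ν]
    (hbdd : ∀ᵐ y ∂ν, ∀ j, y j ∈ Set.Icc (-1:ℝ) 1)
    (n : Fin p → Fin N) (d d' : Fin p → Fin D) :
    |∫ x, ∏ i, x (n i) (d i) * x (n i) (d' i) ∂(Measure.pi fun _ : Fin N => ν)| ≤ 1 := by
  rw [← Real.norm_eq_abs]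
  calc ‖∫ x, ∏ i, x (n i) (d i) * x (n i) (d' i) ∂(Measure.pi fun _ : Fin N => ν)‖
      ≤ 1 * ((Measure.pi fun _ : Fin N => ν) Set.univ).toReal :=
        norm_integral_le_of_norm_le_const (boundK ν hbdd n d d')
    _ = 1 := by simp

/-- Product formula for the integral over the kronecker entry. -/
private lemma integral_kernel (ν : Measure (Fin D → ℝ)) [IsProbabilityMeasure ν]
    (n : Fin p → Fin N) (d d' : Fin p → Fin D) :
    ∫ x, ∏ i, x (n i) (d i) * x (n i) (d' i) ∂(Measure.pi fun _ : Fin N => ν)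
      = ∏ m : Fin N,
          ∫ y, (∏ i ∈ Finset.univ.filter (fun i => n i = m), y (d i) * y (d' i)) ∂ν := by
  letI : MeasureSpace (Fin D → ℝ) := ⟨ν⟩
  have hvol : (Measure.pi fun _ : Fin N => ν) = (volume : Measure (Fin N → Fin D → ℝ)) :=
    MeasureTheory.volume_pi.symm
  have h1 : ∀ x : Fin N → Fin D → ℝ,
      (∏ i, x (n i) (d i) * x (n i) (d' i))
        = ∏ m : Fin N, ∏ i ∈ Finset.univ.filter (fun i => n i = m),
            x m (d i) * x m (d' i) := by
    intro x
    rw [← Finset.prod_fiberwise Finset.univ n (fun i => x (n i) (d i) * x (n i) (d' i))]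
    refine Finset.prod_congr rfl fun m _ => Finset.prod_congr rfl fun i hi => ?_
    rw [(Finset.mem_filter.1 hi).2]
  simp_rw [h1, hvol]
  exact MeasureTheory.integral_fintype_prod_eq_prod (𝕜 := ℝ)
    (fun m (y : Fin D → ℝ) => ∏ i ∈ Finset.univ.filter (fun i => n i = m), y (d i) * y (d' i))

/-- For injective `n`, the integral equals the product of second moments. -/
private lemma integral_kernel_inj (ν : Measure (Fin D → ℝ)) [IsProbabilityMeasure ν]
    (n : Fin p → Fin N) (hn : Function.Injective n) (d d' : Fin p → Fin D) :
    ∫ x, ∏ i, x (n i) (d i) * x (n i) (d' i) ∂(Measure.pi fun _ : Fin N => ν)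
      = ∏ i, ∫ y, y (d i) * y (d' i) ∂ν := by
  rw [integral_kernel ν n d d']
  have hoff : ∀ m ∈ Finset.univ, m ∉ Finset.univ.image n →
      (∫ y, (∏ i ∈ Finset.univ.filter (fun i => n i = m), y (d i) * y (d' i)) ∂ν) = 1 := by
    intro m _ hm
    have : Finset.univ.filter (fun i => n i = m) = ∅ := by
      rw [Finset.filter_eq_empty_iff]
      intro i _
      intro h
      exact hm (Finset.mem_image.2 ⟨i, Finset.mem_univ i, h⟩)
    simp [this]
  rw [← Finset.prod_subset (Finset.subset_univ (Finset.univ.image n)) hoff,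
    Finset.prod_image (fun i _ j _ h => hn h)]
  refine Finset.prod_congr rfl fun i _ => ?_
  have : Finset.univ.filter (fun j => n j = n i) = {i} := by
    ext j
    simp [hn.eq_iff]
  rw [this]
  simp

private lemma card_inj (p N : ℕ) :
    (Finset.univ.filter (fun n : Fin p → Fin N => Function.Injective n)).card
      = N.descFactorial p := by
  classical
  rw [← Fintype.card_subtype]
  rw [Fintype.card_congr (Equiv.subtypeInjectiveEquivEmbedding (Fin p) (Fin N))]
  simp [Fintype.card_embedding_eq]

private lemma desc_lim (p : ℕ) :
    Tendsto (fun N : ℕ => (N.descFactorial p : ℝ) / (N : ℝ) ^ p) atTop (𝓝 1) := by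
  have heq : ∀ᶠ N : ℕ in atTop,
      (N.descFactorial p : ℝ) / (N : ℝ) ^ p = ∏ i ∈ Finset.range p, (1 - (i : ℝ) / N) := by
    filter_upwards [eventually_ge_atTop (max p 1)] with N hN
    have hNp : p ≤ N := le_trans (le_max_left _ _) hN
    have hN0 : (0:ℝ) < N := by
      have : 1 ≤ N := le_trans (le_max_right _ _) hN
      exact_mod_cast this
    rw [Nat.descFactorial_eq_prod_range, Nat.cast_prod,
      show ((N:ℝ)) ^ p = ∏ _i ∈ Finset.range p, (N:ℝ) by
        rw [Finset.prod_const, Finset.card_range],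
      ← Finset.prod_div_distrib]
    refine Finset.prod_congr rfl fun i hi => ?_
    have hi' : i ≤ N := le_trans (le_of_lt (Finset.mem_range.1 hi)) hNp
    rw [Nat.cast_sub hi', sub_div, div_self (ne_of_gt hN0)]
  rw [tendsto_congr' heq]
  have : Tendsto (fun N : ℕ => ∏ i ∈ Finset.range p, (1 - (i : ℝ) / N)) atTop
      (𝓝 (∏ _i ∈ Finset.range p, (1:ℝ))) := by
    apply tendsto_finset_prod
    intro i _
    have := tendsto_const_div_atTop_nhds_zero_nat (i : ℝ)
    simpa using tendsto_const_nhds.sub this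
  simpa using this

/-- Key per-(d,d') limit. -/
private lemma key_limit {D p : ℕ} (ν : Measure (Fin D → ℝ)) [IsProbabilityMeasure ν]
    (hbdd : ∀ᵐ y ∂ν, ∀ j, y j ∈ Set.Icc (-1:ℝ) 1) (d d' : Fin p → Fin D) :
    Tendsto (fun N : ℕ => ((N : ℝ) ^ p)⁻¹ *
        ∑ n : Fin p → Fin N,
          ∫ x, ∏ i, x (n i) (d i) * x (n i) (d' i) ∂(Measure.pi fun _ : Fin N => ν))
      atTop (𝓝 (∏ i, ∫ y, y (d i) * y (d' i) ∂ν)) := by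
  classical
  set Q : ℝ := ∏ i, ∫ y, y (d i) * y (d' i) ∂ν with hQ
  have hsplit : ∀ N : ℕ, ((N : ℝ) ^ p)⁻¹ *
      (∑ n : Fin p → Fin N,
        ∫ x, ∏ i, x (n i) (d i) * x (n i) (d' i) ∂(Measure.pi fun _ : Fin N => ν))
      = ((N.descFactorial p : ℝ) / (N : ℝ) ^ p) * Q
        + ((N : ℝ) ^ p)⁻¹ *
          ∑ n ∈ Finset.univ.filter (fun n : Fin p → Fin N => ¬ Function.Injective n),
            ∫ x, ∏ i, x (n i) (d i) * x (n i) (d' i) ∂(Measure.pi fun _ : Fin N => ν) := by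
    intro N
    rw [← Finset.sum_filter_add_sum_filter_not Finset.univ
      (fun n : Fin p → Fin N => Function.Injective n)]
    rw [mul_add]
    congr 1
    have : ∑ n ∈ Finset.univ.filter (fun n : Fin p → Fin N => Function.Injective n),
        ∫ x, ∏ i, x (n i) (d i) * x (n i) (d' i) ∂(Measure.pi fun _ : Fin N => ν)
        = (N.descFactorial p : ℝ) * Q := by
      rw [Finset.sum_congr rfl (fun n hn =>
        integral_kernel_inj ν n (Finset.mem_filter.1 hn).2 d d')]
      rw [Finset.sum_const, card_inj, nsmul_eq_mul]
    rw [this]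
    ring
  simp_rw [hsplit]
  have h1 : Tendsto (fun N : ℕ => ((N.descFactorial p : ℝ) / (N : ℝ) ^ p) * Q) atTop
      (𝓝 Q) := by
    simpa using (desc_lim p).mul_const Q
  have h2 : Tendsto (fun N : ℕ => ((N : ℝ) ^ p)⁻¹ *
      ∑ n ∈ Finset.univ.filter (fun n : Fin p → Fin N => ¬ Function.Injective n),
        ∫ x, ∏ i, x (n i) (d i) * x (n i) (d' i) ∂(Measure.pi fun _ : Fin N => ν)) atTop
      (𝓝 0) := by
    apply squeeze_zero_norm' (a := fun N : ℕ => 1 - (N.descFactorial p : ℝ) / (N:ℝ)^p)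
    · filter_upwards [eventually_ge_atTop 1] with N hN1
      have hN0 : (0:ℝ) < (N:ℝ)^p := by positivity
      rw [Real.norm_eq_abs, abs_mul, abs_inv, abs_of_pos hN0]
      have hb : |∑ n ∈ Finset.univ.filter (fun n : Fin p → Fin N => ¬ Function.Injective n),
          ∫ x, ∏ i, x (n i) (d i) * x (n i) (d' i) ∂(Measure.pi fun _ : Fin N => ν)|
          ≤ (Finset.univ.filter (fun n : Fin p → Fin N => ¬ Function.Injective n)).card := by
        calc _ ≤ ∑ n ∈ Finset.univ.filter (fun n : Fin p → Fin N => ¬ Function.Injective n),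
              |∫ x, ∏ i, x (n i) (d i) * x (n i) (d' i) ∂(Measure.pi fun _ : Fin N => ν)| :=
              Finset.abs_sum_le_sum_abs _ _
          _ ≤ ∑ _n ∈ Finset.univ.filter (fun n : Fin p → Fin N => ¬ Function.Injective n),
              (1:ℝ) := Finset.sum_le_sum (fun n _ => absintK ν hbdd n d d')
          _ = _ := by simp
      have hcard : ((Finset.univ.filter
          (fun n : Fin p → Fin N => ¬ Function.Injective n)).card : ℝ)
          = (N:ℝ)^p - N.descFactorial p := by
        have hsum := Finset.card_filter_add_card_filter_not
          (s := (Finset.univ : Finset (Fin p → Fin N)))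
          (p := fun n => Function.Injective n)
        rw [card_inj, Finset.card_univ, Fintype.card_fun, Fintype.card_fin, Fintype.card_fin]
          at hsum
        have : ((Finset.univ.filter
            (fun n : Fin p → Fin N => ¬ Function.Injective n)).card : ℝ)
            = ((N^p : ℕ) : ℝ) - (N.descFactorial p : ℝ) := by
          have := congrArg (fun k : ℕ => (k : ℝ)) hsum
          push_cast at this ⊢
          linarith
        rw [this]; push_cast; ring
      have hdesc_le : (N.descFactorial p : ℝ) ≤ (N:ℝ)^p := by
        have := Nat.descFactorial_le_pow N p
        exact_mod_cast this
      calc ((N:ℝ)^p)⁻¹ * |∑ n ∈ Finset.univ.filter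
            (fun n : Fin p → Fin N => ¬ Function.Injective n),
            ∫ x, ∏ i, x (n i) (d i) * x (n i) (d' i) ∂(Measure.pi fun _ : Fin N => ν)|
          ≤ ((N:ℝ)^p)⁻¹ * ((N:ℝ)^p - N.descFactorial p) := by
            rw [hcard] at hb
            exact mul_le_mul_of_nonneg_left hb (inv_nonneg.2 (le_of_lt hN0))
        _ = 1 - (N.descFactorial p : ℝ)/(N:ℝ)^p := by
            field_simp
    · have := (desc_lim p)
      simpa using (tendsto_const_nhds (x := (1:ℝ)) (f := atTop)).sub this
  simpa using h1.add h2

end Aux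

/-- If the rows of `X ∈ ℝ^{N×D}` are i.i.d. with entries in `[-1,1]`, then
`N^{-p} E|X^{⊗p} A|² → (A Aᵀ)·(E[X₁ᵀ X₁])^{⊗p}` as `N → ∞`. -/
theorem stmt_14 {D p L : ℕ} (A : Matrix (Fin p → Fin D) (Fin L) ℝ)
    (ν : Measure (Fin D → ℝ)) [IsProbabilityMeasure ν]
    (hbdd : ∀ᵐ x ∂ν, ∀ j : Fin D, x j ∈ Set.Icc (-1 : ℝ) 1) :
    Tendsto
      (fun N : ℕ => ((N : ℝ) ^ p)⁻¹ *
        ∫ x, (∑ n : Fin p → Fin N, ∑ l : Fin L, ((kpowX p x * A) n l) ^ 2)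
          ∂(Measure.pi fun _ : Fin N => ν))
      atTop
      (𝓝 (dotpG (A * A.transpose)
        (kpowD p (Matrix.of fun i j : Fin D => ∫ x, x i * x j ∂ν)))) := by
  classical
  have hint : ∀ N : ℕ,
      (∫ x, (∑ n : Fin p → Fin N, ∑ l : Fin L, ((kpowX p x * A) n l) ^ 2)
          ∂(Measure.pi fun _ : Fin N => ν))
      = ∑ d : Fin p → Fin D, ∑ d' : Fin p → Fin D, ((A * A.transpose) d d') *
          ∑ n : Fin p → Fin N,
            ∫ x, ∏ i, x (n i) (d i) * x (n i) (d' i) ∂(Measure.pi fun _ : Fin N => ν) := by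
    intro N
    have hpt : ∀ x : Fin N → Fin D → ℝ,
        (∑ n : Fin p → Fin N, ∑ l : Fin L, ((kpowX p x * A) n l) ^ 2)
        = ∑ d : Fin p → Fin D, ∑ d' : Fin p → Fin D, ∑ n : Fin p → Fin N,
            ((A * A.transpose) d d') * ∏ i, x (n i) (d i) * x (n i) (d' i) := by
      intro x
      have h1 : ∀ n : Fin p → Fin N, ∑ l : Fin L, ((kpowX p x * A) n l) ^ 2
          = ∑ d : Fin p → Fin D, ∑ d' : Fin p → Fin D,
              ((A * A.transpose) d d') * ∏ i, x (n i) (d i) * x (n i) (d' i) := by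
        intro n
        have h2 : ∀ l : Fin L, ((kpowX p x * A) n l) ^ 2
            = ∑ d : Fin p → Fin D, ∑ d' : Fin p → Fin D,
                (kpowX p x n d * A d l) * (kpowX p x n d' * A d' l) := by
          intro l
          rw [sq, Matrix.mul_apply, Finset.sum_mul_sum]
        simp_rw [h2]
        rw [Finset.sum_comm]
        refine Finset.sum_congr rfl fun d _ => ?_
        rw [Finset.sum_comm]
        refine Finset.sum_congr rfl fun d' _ => ?_
        have hK : kpowX p x n d * kpowX p x n d'
            = ∏ i, x (n i) (d i) * x (n i) (d' i) := by
          show (∏ i, x (n i) (d i)) * (∏ i, x (n i) (d' i))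
              = ∏ i, x (n i) (d i) * x (n i) (d' i)
          rw [← Finset.prod_mul_distrib]
        rw [Matrix.mul_apply]
        simp_rw [Matrix.transpose_apply]
        rw [Finset.sum_mul]
        refine Finset.sum_congr rfl fun l _ => ?_
        rw [← hK]; ring
      simp_rw [h1]
      rw [Finset.sum_comm]
      exact Finset.sum_congr rfl fun d _ => Finset.sum_comm
    simp_rw [hpt]
    rw [integral_finset_sum _ (fun d _ => integrable_finset_sum _ (fun d' _ =>
      integrable_finset_sum _ (fun n _ => (intK ν hbdd n d d').const_mul _)))]
    refine Finset.sum_congr rfl fun d _ => ?_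
    rw [integral_finset_sum _ (fun d' _ =>
      integrable_finset_sum _ (fun n _ => (intK ν hbdd n d d').const_mul _))]
    refine Finset.sum_congr rfl fun d' _ => ?_
    rw [integral_finset_sum _ (fun n _ => (intK ν hbdd n d d').const_mul _),
      Finset.mul_sum]
    exact Finset.sum_congr rfl fun n _ => integral_const_mul _ _
  simp_rw [hint]
  have hre : ∀ N : ℕ, ((N : ℝ) ^ p)⁻¹ *
      (∑ d : Fin p → Fin D, ∑ d' : Fin p → Fin D, ((A * A.transpose) d d') *
        ∑ n : Fin p → Fin N,
          ∫ x, ∏ i, x (n i) (d i) * x (n i) (d' i) ∂(Measure.pi fun _ : Fin N => ν))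
      = ∑ d : Fin p → Fin D, ∑ d' : Fin p → Fin D, ((A * A.transpose) d d') *
          (((N : ℝ) ^ p)⁻¹ * ∑ n : Fin p → Fin N,
            ∫ x, ∏ i, x (n i) (d i) * x (n i) (d' i) ∂(Measure.pi fun _ : Fin N => ν)) := by
    intro N
    rw [Finset.mul_sum]
    refine Finset.sum_congr rfl fun d _ => ?_
    rw [Finset.mul_sum]
    exact Finset.sum_congr rfl fun d' _ => by ring
  simp_rw [hre]
  have htarget : dotpG (A * A.transpose)
      (kpowD p (Matrix.of fun i j : Fin D => ∫ x, x i * x j ∂ν))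
      = ∑ d : Fin p → Fin D, ∑ d' : Fin p → Fin D, ((A * A.transpose) d d') *
          ∏ i, ∫ y, y (d i) * y (d' i) ∂ν := by
    rfl
  rw [htarget]
  apply tendsto_finset_sum
  intro d _
  apply tendsto_finset_sum
  intro d' _
  exact (key_limit ν hbdd d d').const_mul _
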